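/- Let κ > 0 and K be real constants with σ := K/κ < 0, let C and D ≠ 0 be real constants, let ε ∈ {+1, −1}, and define φ(u,s) := (1/(2√(−σ)))·[ 1/(ε·√(C + 2√(−σ)·D − u + s²) − s) − 1/(ε·√(C − 2√(−σ)·D − u + s²) − s) ] on an open set where both quantities under the square roots are positive, the denominators are nonzero, and φ > 0. Then φ satisfies the projective PDE (∗): φ₂₂ = 2(φ₁ − s·φ₁₂), and with ψ := (φ₂ + 2s·φ₁)/(2φ) it satisfies κ·[ψ² − (ψ₂ + 2s·ψ₁)] = K·φ². -/

import Mathlib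

set_option maxHeartbeats 2000000

private lemma shen18_inner_u (c s u : ℝ) :
    HasDerivAt (fun t : ℝ => c - t + s ^ 2) (-1) u := by
  simpa using (((hasDerivAt_id u).const_sub c).add_const (s ^ 2))

private lemma shen18_inner_s (c u s : ℝ) :
    HasDerivAt (fun t : ℝ => c - u + t ^ 2) (2 * s) s := by
  simpa using ((hasDerivAt_pow 2 s).const_add (c - u))

private lemma shen18_sqrt_u (c s u : ℝ) (h : 0 < c - u + s ^ 2) :
    HasDerivAt (fun t : ℝ => Real.sqrt (c - t + s ^ 2))
      (-1 / (2 * Real.sqrt (c - u + s ^ 2))) u :=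
  (shen18_inner_u c s u).sqrt (ne_of_gt h)

private lemma shen18_sqrt_s (c u s : ℝ) (h : 0 < c - u + s ^ 2) :
    HasDerivAt (fun t : ℝ => Real.sqrt (c - u + t ^ 2))
      (2 * s / (2 * Real.sqrt (c - u + s ^ 2))) s :=
  (shen18_inner_s c u s).sqrt (ne_of_gt h)

/-- u-derivative of `1/(ε√(c-u+s²) - s)`. -/
private lemma shen18_A (ε c s u : ℝ) (h : 0 < c - u + s ^ 2)
    (hd : ε * Real.sqrt (c - u + s ^ 2) - s ≠ 0) :
    HasDerivAt (fun t : ℝ => 1 / (ε * Real.sqrt (c - t + s ^ 2) - s))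
      (ε / 2 * (1 / (Real.sqrt (c - u + s ^ 2) * (ε * Real.sqrt (c - u + s ^ 2) - s) ^ 2))) u := by
  have hq : Real.sqrt (c - u + s ^ 2) ≠ 0 := Real.sqrt_ne_zero'.2 h
  have h1 : HasDerivAt (fun t : ℝ => ε * Real.sqrt (c - t + s ^ 2) - s)
      (ε * (-1 / (2 * Real.sqrt (c - u + s ^ 2)))) u :=
    ((shen18_sqrt_u c s u h).const_mul ε).sub_const s
  have h2 := h1.inv hd
  simp only [one_div]
  convert h2 using 1
  · rfl
  · rfl
  · rfl
  obtain ⟨q, hQ⟩ : ∃ x, Real.sqrt (c - u + s ^ 2) = x := ⟨_, rfl⟩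
  rw [hQ] at hq hd ⊢
  obtain ⟨d, hE⟩ : ∃ x, ε * q - s = x := ⟨_, rfl⟩
  rw [hE] at hd ⊢
  field_simp

/-- s-derivative of `1/(ε√(c-u+s²) - s)`. -/
private lemma shen18_B (ε : ℝ) (hε : ε = 1 ∨ ε = -1) (c u s : ℝ) (h : 0 < c - u + s ^ 2)
    (hd : ε * Real.sqrt (c - u + s ^ 2) - s ≠ 0) :
    HasDerivAt (fun t : ℝ => 1 / (ε * Real.sqrt (c - u + t ^ 2) - t))
      (ε * (1 / (Real.sqrt (c - u + s ^ 2) * (ε * Real.sqrt (c - u + s ^ 2) - s)))) s := by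
  have hq : Real.sqrt (c - u + s ^ 2) ≠ 0 := Real.sqrt_ne_zero'.2 h
  have h1 : HasDerivAt (fun t : ℝ => ε * Real.sqrt (c - u + t ^ 2) - t)
      (ε * (2 * s / (2 * Real.sqrt (c - u + s ^ 2))) - 1) s :=
    ((shen18_sqrt_s c u s h).const_mul ε).sub (hasDerivAt_id s)
  have h2 := h1.inv hd
  simp only [one_div]
  convert h2 using 1
  · rfl
  · rfl
  · rfl
  obtain ⟨q, hQ⟩ : ∃ x, Real.sqrt (c - u + s ^ 2) = x := ⟨_, rfl⟩
  rw [hQ] at hq hd ⊢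
  obtain ⟨d, hE⟩ : ∃ x, ε * q - s = x := ⟨_, rfl⟩
  rw [hE] at hd ⊢
  have hs : s = ε * q - d := by linarith
  rw [hs]
  rcases hε with rfl | rfl <;> field_simp <;> ring

/-- s-derivative of `1/(√(c-u+s²)·(ε√(c-u+s²) - s))`. -/
private lemma shen18_C (ε : ℝ) (hε : ε = 1 ∨ ε = -1) (c u s : ℝ) (h : 0 < c - u + s ^ 2)
    (hd : ε * Real.sqrt (c - u + s ^ 2) - s ≠ 0) :
    HasDerivAt (fun t : ℝ =>
        1 / (Real.sqrt (c - u + t ^ 2) * (ε * Real.sqrt (c - u + t ^ 2) - t)))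
      (1 / Real.sqrt (c - u + s ^ 2) ^ 3) s := by
  have hq : Real.sqrt (c - u + s ^ 2) ≠ 0 := Real.sqrt_ne_zero'.2 h
  have h1 : HasDerivAt (fun t : ℝ => ε * Real.sqrt (c - u + t ^ 2) - t)
      (ε * (2 * s / (2 * Real.sqrt (c - u + s ^ 2))) - 1) s :=
    ((shen18_sqrt_s c u s h).const_mul ε).sub (hasDerivAt_id s)
  have h2 := ((shen18_sqrt_s c u s h).mul h1).inv (mul_ne_zero hq hd)
  simp only [one_div]
  convert h2 using 1
  · rfl
  · rfl
  · rfl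
  simp only [Pi.mul_apply, Pi.pow_apply]
  obtain ⟨q, hQ⟩ : ∃ x, Real.sqrt (c - u + s ^ 2) = x := ⟨_, rfl⟩
  rw [hQ] at hq hd ⊢
  obtain ⟨d, hE⟩ : ∃ x, ε * q - s = x := ⟨_, rfl⟩
  rw [hE] at hd ⊢
  have hs : s = ε * q - d := by linarith
  rw [hs]
  rcases hε with rfl | rfl <;> field_simp <;> ring

/-- s-derivative of `1/(√(c-u+s²)·(ε√(c-u+s²) - s)²)`. -/
private lemma shen18_D (ε : ℝ) (hε : ε = 1 ∨ ε = -1) (c u s : ℝ) (h : 0 < c - u + s ^ 2)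
    (hd : ε * Real.sqrt (c - u + s ^ 2) - s ≠ 0) :
    HasDerivAt (fun t : ℝ =>
        1 / (Real.sqrt (c - u + t ^ 2) * (ε * Real.sqrt (c - u + t ^ 2) - t) ^ 2))
      ((2 * ε * Real.sqrt (c - u + s ^ 2) - s)
        / (Real.sqrt (c - u + s ^ 2) ^ 3 * (ε * Real.sqrt (c - u + s ^ 2) - s) ^ 2)) s := by
  have hq : Real.sqrt (c - u + s ^ 2) ≠ 0 := Real.sqrt_ne_zero'.2 h
  have h1 : HasDerivAt (fun t : ℝ => ε * Real.sqrt (c - u + t ^ 2) - t)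
      (ε * (2 * s / (2 * Real.sqrt (c - u + s ^ 2))) - 1) s :=
    ((shen18_sqrt_s c u s h).const_mul ε).sub (hasDerivAt_id s)
  have h2 := ((shen18_sqrt_s c u s h).mul (h1.pow 2)).inv
    (mul_ne_zero hq (pow_ne_zero 2 hd))
  simp only [one_div]
  convert h2 using 1
  · rfl
  · rfl
  · rfl
  simp only [Pi.mul_apply, Pi.pow_apply]
  push_cast
  simp only [pow_one]
  obtain ⟨q, hQ⟩ : ∃ x, Real.sqrt (c - u + s ^ 2) = x := ⟨_, rfl⟩
  rw [hQ] at hq hd ⊢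
  obtain ⟨d, hE⟩ : ∃ x, ε * q - s = x := ⟨_, rfl⟩
  rw [hE] at hd ⊢
  have hs : s = ε * q - d := by linarith
  rw [hs]
  rcases hε with rfl | rfl <;> field_simp <;> ring

/-- First partial derivative of `f = f(u,s)` with respect to the first variable. -/
noncomputable def pd1 (f : ℝ → ℝ → ℝ) (u s : ℝ) : ℝ := deriv (fun t => f t s) u

/-- First partial derivative of `f = f(u,s)` with respect to the second variable. -/
noncomputable def pd2 (f : ℝ → ℝ → ℝ) (u s : ℝ) : ℝ := deriv (f u) s

/-- `ψ := (φ₂ + 2s·φ₁)/(2φ)`. -/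
noncomputable def psi (f : ℝ → ℝ → ℝ) (u s : ℝ) : ℝ :=
  (pd2 f u s + 2 * s * pd1 f u s) / (2 * f u s)

/-- The case `D ≠ 0`, `σ < 0` (Shen's projectively flat metrics): the explicit `φ`
below satisfies the projective PDE `φ₂₂ = 2(φ₁ − s·φ₁₂)` and the Einstein PDE
with `μ = 0`: `κ·[ψ² − (ψ₂ + 2s·ψ₁)] = K·φ²`. -/
theorem stmt_18 (κ K : ℝ) (hκ : 0 < κ) (σ : ℝ) (hσdef : σ = K / κ) (hσ : σ < 0)
    (C D : ℝ) (hD : D ≠ 0) (ε : ℝ) (hε : ε = 1 ∨ ε = -1)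
    (φ : ℝ → ℝ → ℝ)
    (hφ : ∀ u s : ℝ, φ u s = (1 / (2 * Real.sqrt (-σ)))
        * (1 / (ε * Real.sqrt (C + 2 * Real.sqrt (-σ) * D - u + s ^ 2) - s)
          - 1 / (ε * Real.sqrt (C - 2 * Real.sqrt (-σ) * D - u + s ^ 2) - s))) :
    ∀ u s : ℝ,
      0 < C + 2 * Real.sqrt (-σ) * D - u + s ^ 2 →
      0 < C - 2 * Real.sqrt (-σ) * D - u + s ^ 2 →
      ε * Real.sqrt (C + 2 * Real.sqrt (-σ) * D - u + s ^ 2) - s ≠ 0 →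
      ε * Real.sqrt (C - 2 * Real.sqrt (-σ) * D - u + s ^ 2) - s ≠ 0 →
      0 < φ u s →
      (pd2 (pd2 φ) u s = 2 * (pd1 φ u s - s * pd2 (pd1 φ) u s)
        ∧ κ * ((psi φ u s) ^ 2 - (pd2 (psi φ) u s + 2 * s * pd1 (psi φ) u s))
          = K * (φ u s) ^ 2) := by
  intro u s hA hB hd1 hd2 hφ0
  have hσneg : (0:ℝ) < -σ := by linarith
  set r := Real.sqrt (-σ) with hrdef
  have hrpos : 0 < r := Real.sqrt_pos.2 hσneg
  have hrne : r ≠ 0 := ne_of_gt hrpos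
  have hr2 : r ^ 2 = -σ := Real.sq_sqrt (le_of_lt hσneg)
  set c₁ := C + 2 * r * D with hc1
  set c₂ := C - 2 * r * D with hc2
  -- first partial in `u`
  have H1 : ∀ v t : ℝ, 0 < c₁ - v + t ^ 2 → 0 < c₂ - v + t ^ 2 →
      ε * Real.sqrt (c₁ - v + t ^ 2) - t ≠ 0 → ε * Real.sqrt (c₂ - v + t ^ 2) - t ≠ 0 →
      pd1 φ v t = 1 / (2 * r) *
        (ε / 2 * (1 / (Real.sqrt (c₁ - v + t ^ 2) * (ε * Real.sqrt (c₁ - v + t ^ 2) - t) ^ 2))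
          - ε / 2 * (1 / (Real.sqrt (c₂ - v + t ^ 2) * (ε * Real.sqrt (c₂ - v + t ^ 2) - t) ^ 2))) := by
    intro v t h1 h2 h3 h4
    have hfun : (fun x => φ x t) = fun x => 1 / (2 * r) *
        (1 / (ε * Real.sqrt (c₁ - x + t ^ 2) - t) - 1 / (ε * Real.sqrt (c₂ - x + t ^ 2) - t)) :=
      funext fun x => hφ x t
    show deriv (fun x => φ x t) v = _
    rw [hfun]
    exact (((shen18_A ε c₁ t v h1 h3).sub (shen18_A ε c₂ t v h2 h4)).const_mul (1 / (2 * r))).deriv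
  -- first partial in `s`
  have H2 : ∀ v t : ℝ, 0 < c₁ - v + t ^ 2 → 0 < c₂ - v + t ^ 2 →
      ε * Real.sqrt (c₁ - v + t ^ 2) - t ≠ 0 → ε * Real.sqrt (c₂ - v + t ^ 2) - t ≠ 0 →
      pd2 φ v t = 1 / (2 * r) *
        (ε * (1 / (Real.sqrt (c₁ - v + t ^ 2) * (ε * Real.sqrt (c₁ - v + t ^ 2) - t)))
          - ε * (1 / (Real.sqrt (c₂ - v + t ^ 2) * (ε * Real.sqrt (c₂ - v + t ^ 2) - t)))) := by
    intro v t h1 h2 h3 h4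
    have hfun : (φ v) = fun y => 1 / (2 * r) *
        (1 / (ε * Real.sqrt (c₁ - v + y ^ 2) - y) - 1 / (ε * Real.sqrt (c₂ - v + y ^ 2) - y)) :=
      funext fun y => hφ v y
    show deriv (φ v) t = _
    rw [hfun]
    exact (((shen18_B ε hε c₁ v t h1 h3).sub (shen18_B ε hε c₂ v t h2 h4)).const_mul
      (1 / (2 * r))).deriv
  -- closed form for ψ
  have Hψ : ∀ v t : ℝ, 0 < c₁ - v + t ^ 2 → 0 < c₂ - v + t ^ 2 →
      ε * Real.sqrt (c₁ - v + t ^ 2) - t ≠ 0 → ε * Real.sqrt (c₂ - v + t ^ 2) - t ≠ 0 →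
      φ v t ≠ 0 →
      psi φ v t = (1 / (ε * Real.sqrt (c₁ - v + t ^ 2) - t)
        + 1 / (ε * Real.sqrt (c₂ - v + t ^ 2) - t)) / 2 := by
    intro v t h1 h2 h3 h4 h5
    have hq1 : Real.sqrt (c₁ - v + t ^ 2) ≠ 0 := Real.sqrt_ne_zero'.2 h1
    have hq2 : Real.sqrt (c₂ - v + t ^ 2) ≠ 0 := Real.sqrt_ne_zero'.2 h2
    have h2φ : 2 * φ v t ≠ 0 := mul_ne_zero two_ne_zero h5
    have key : pd2 φ v t + 2 * t * pd1 φ v t =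
        ((1 / (ε * Real.sqrt (c₁ - v + t ^ 2) - t)
          + 1 / (ε * Real.sqrt (c₂ - v + t ^ 2) - t)) / 2) * (2 * φ v t) := by
      rw [H1 v t h1 h2 h3 h4, H2 v t h1 h2 h3 h4, hφ v t]
      obtain ⟨q1, hQ1⟩ : ∃ x, Real.sqrt (c₁ - v + t ^ 2) = x := ⟨_, rfl⟩
      obtain ⟨q2, hQ2⟩ : ∃ x, Real.sqrt (c₂ - v + t ^ 2) = x := ⟨_, rfl⟩
      simp only [hQ1, hQ2] at h3 h4 hq1 hq2 ⊢
      obtain ⟨d1, hE1⟩ : ∃ x, ε * q1 - t = x := ⟨_, rfl⟩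
      obtain ⟨d2, hE2⟩ : ∃ x, ε * q2 - t = x := ⟨_, rfl⟩
      rw [hE1] at h3 ⊢
      rw [hE2] at h4 ⊢
      field_simp
      rw [← hE1, ← hE2]
      rcases hε with rfl | rfl <;> ring
    simp only [psi]
    rw [key]
    exact mul_div_cancel_right₀ _ h2φ
  have hq1s : Real.sqrt (c₁ - u + s ^ 2) ≠ 0 := Real.sqrt_ne_zero'.2 hA
  have hq2s : Real.sqrt (c₂ - u + s ^ 2) ≠ 0 := Real.sqrt_ne_zero'.2 hB
  -- continuity facts (in the second variable)
  have hcont1 : Continuous fun t' : ℝ => ε * Real.sqrt (c₁ - u + t' ^ 2) - t' := by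
    fun_prop
  have hcont2 : Continuous fun t' : ℝ => ε * Real.sqrt (c₂ - u + t' ^ 2) - t' := by
    fun_prop
  have ev1 : ∀ᶠ t' in nhds s, 0 < c₁ - u + t' ^ 2 := by
    have hc : ContinuousAt (fun t' : ℝ => c₁ - u + t' ^ 2) s := by fun_prop
    filter_upwards [hc.eventually_mem (Ioi_mem_nhds hA)] with x hx using hx
  have ev2 : ∀ᶠ t' in nhds s, 0 < c₂ - u + t' ^ 2 := by
    have hc : ContinuousAt (fun t' : ℝ => c₂ - u + t' ^ 2) s := by fun_prop
    filter_upwards [hc.eventually_mem (Ioi_mem_nhds hB)] with x hx using hx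
  have ev3 : ∀ᶠ t' in nhds s, ε * Real.sqrt (c₁ - u + t' ^ 2) - t' ≠ 0 :=
    hcont1.continuousAt.eventually_ne hd1
  have ev4 : ∀ᶠ t' in nhds s, ε * Real.sqrt (c₂ - u + t' ^ 2) - t' ≠ 0 :=
    hcont2.continuousAt.eventually_ne hd2
  have evφ : ∀ᶠ t' in nhds s, φ u t' ≠ 0 := by
    have hfun : (φ u) = fun t' => 1 / (2 * r) *
        (1 / (ε * Real.sqrt (c₁ - u + t' ^ 2) - t')
          - 1 / (ε * Real.sqrt (c₂ - u + t' ^ 2) - t')) := funext fun t' => hφ u t'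
    have hc : ContinuousAt (φ u) s := by
      rw [hfun]
      exact continuousAt_const.mul
        (((continuousAt_const.div hcont1.continuousAt hd1)).sub
          (continuousAt_const.div hcont2.continuousAt hd2))
    exact hc.eventually_ne (ne_of_gt hφ0)
  -- continuity facts (in the first variable)
  have hcont1u : Continuous fun v : ℝ => ε * Real.sqrt (c₁ - v + s ^ 2) - s := by
    fun_prop
  have hcont2u : Continuous fun v : ℝ => ε * Real.sqrt (c₂ - v + s ^ 2) - s := by
    fun_prop
  have ev1u : ∀ᶠ v in nhds u, 0 < c₁ - v + s ^ 2 := by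
    have hc : ContinuousAt (fun v : ℝ => c₁ - v + s ^ 2) u := by fun_prop
    filter_upwards [hc.eventually_mem (Ioi_mem_nhds hA)] with x hx using hx
  have ev2u : ∀ᶠ v in nhds u, 0 < c₂ - v + s ^ 2 := by
    have hc : ContinuousAt (fun v : ℝ => c₂ - v + s ^ 2) u := by fun_prop
    filter_upwards [hc.eventually_mem (Ioi_mem_nhds hB)] with x hx using hx
  have ev3u : ∀ᶠ v in nhds u, ε * Real.sqrt (c₁ - v + s ^ 2) - s ≠ 0 :=
    hcont1u.continuousAt.eventually_ne hd1
  have ev4u : ∀ᶠ v in nhds u, ε * Real.sqrt (c₂ - v + s ^ 2) - s ≠ 0 :=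
    hcont2u.continuousAt.eventually_ne hd2
  have evφu : ∀ᶠ v in nhds u, φ v s ≠ 0 := by
    have hfun : (fun v => φ v s) = fun v => 1 / (2 * r) *
        (1 / (ε * Real.sqrt (c₁ - v + s ^ 2) - s)
          - 1 / (ε * Real.sqrt (c₂ - v + s ^ 2) - s)) := funext fun v => hφ v s
    have hc : ContinuousAt (fun v => φ v s) u := by
      rw [hfun]
      exact continuousAt_const.mul
        (((continuousAt_const.div hcont1u.continuousAt hd1)).sub
          (continuousAt_const.div hcont2u.continuousAt hd2))
    exact hc.eventually_ne (ne_of_gt hφ0)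
  -- second derivatives
  have e21 : pd2 (pd1 φ) u s = 1 / (2 * r) *
      (ε / 2 * ((2 * ε * Real.sqrt (c₁ - u + s ^ 2) - s)
          / (Real.sqrt (c₁ - u + s ^ 2) ^ 3 * (ε * Real.sqrt (c₁ - u + s ^ 2) - s) ^ 2))
        - ε / 2 * ((2 * ε * Real.sqrt (c₂ - u + s ^ 2) - s)
          / (Real.sqrt (c₂ - u + s ^ 2) ^ 3 * (ε * Real.sqrt (c₂ - u + s ^ 2) - s) ^ 2))) := by
    have heq : (fun t' => pd1 φ u t') =ᶠ[nhds s] fun t' => 1 / (2 * r) *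
        (ε / 2 * (1 / (Real.sqrt (c₁ - u + t' ^ 2) * (ε * Real.sqrt (c₁ - u + t' ^ 2) - t') ^ 2))
          - ε / 2 * (1 / (Real.sqrt (c₂ - u + t' ^ 2)
            * (ε * Real.sqrt (c₂ - u + t' ^ 2) - t') ^ 2))) := by
      filter_upwards [ev1, ev2, ev3, ev4] with x h1 h2 h3 h4 using H1 u x h1 h2 h3 h4
    show deriv (fun t' => pd1 φ u t') s = _
    rw [heq.deriv_eq]
    exact ((((shen18_D ε hε c₁ u s hA hd1).const_mul (ε / 2)).sub
      ((shen18_D ε hε c₂ u s hB hd2).const_mul (ε / 2))).const_mul (1 / (2 * r))).deriv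
  have e22 : pd2 (pd2 φ) u s = 1 / (2 * r) *
      (ε * (1 / Real.sqrt (c₁ - u + s ^ 2) ^ 3) - ε * (1 / Real.sqrt (c₂ - u + s ^ 2) ^ 3)) := by
    have heq : (fun t' => pd2 φ u t') =ᶠ[nhds s] fun t' => 1 / (2 * r) *
        (ε * (1 / (Real.sqrt (c₁ - u + t' ^ 2) * (ε * Real.sqrt (c₁ - u + t' ^ 2) - t')))
          - ε * (1 / (Real.sqrt (c₂ - u + t' ^ 2)
            * (ε * Real.sqrt (c₂ - u + t' ^ 2) - t')))) := by
      filter_upwards [ev1, ev2, ev3, ev4] with x h1 h2 h3 h4 using H2 u x h1 h2 h3 h4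
    show deriv (fun t' => pd2 φ u t') s = _
    rw [heq.deriv_eq]
    exact ((((shen18_C ε hε c₁ u s hA hd1).const_mul ε).sub
      ((shen18_C ε hε c₂ u s hB hd2).const_mul ε)).const_mul (1 / (2 * r))).deriv
  have eψ2 : pd2 (psi φ) u s =
      (ε * (1 / (Real.sqrt (c₁ - u + s ^ 2) * (ε * Real.sqrt (c₁ - u + s ^ 2) - s)))
        + ε * (1 / (Real.sqrt (c₂ - u + s ^ 2) * (ε * Real.sqrt (c₂ - u + s ^ 2) - s)))) / 2 := by
    have heq : (fun t' => psi φ u t') =ᶠ[nhds s] fun t' =>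
        (1 / (ε * Real.sqrt (c₁ - u + t' ^ 2) - t')
          + 1 / (ε * Real.sqrt (c₂ - u + t' ^ 2) - t')) / 2 := by
      filter_upwards [ev1, ev2, ev3, ev4, evφ] with x h1 h2 h3 h4 h5 using
        Hψ u x h1 h2 h3 h4 h5
    show deriv (fun t' => psi φ u t') s = _
    rw [heq.deriv_eq]
    exact (((shen18_B ε hε c₁ u s hA hd1).add (shen18_B ε hε c₂ u s hB hd2)).div_const 2).deriv
  have eψ1 : pd1 (psi φ) u s =
      (ε / 2 * (1 / (Real.sqrt (c₁ - u + s ^ 2) * (ε * Real.sqrt (c₁ - u + s ^ 2) - s) ^ 2))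
        + ε / 2 * (1 / (Real.sqrt (c₂ - u + s ^ 2)
          * (ε * Real.sqrt (c₂ - u + s ^ 2) - s) ^ 2))) / 2 := by
    have heq : (fun v => psi φ v s) =ᶠ[nhds u] fun v =>
        (1 / (ε * Real.sqrt (c₁ - v + s ^ 2) - s)
          + 1 / (ε * Real.sqrt (c₂ - v + s ^ 2) - s)) / 2 := by
      filter_upwards [ev1u, ev2u, ev3u, ev4u, evφu] with x h1 h2 h3 h4 h5 using
        Hψ x s h1 h2 h3 h4 h5
    show deriv (fun v => psi φ v s) u = _
    rw [heq.deriv_eq]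
    exact (((shen18_A ε c₁ s u hA hd1).add (shen18_A ε c₂ s u hB hd2)).div_const 2).deriv
  constructor
  · rw [e22, e21, H1 u s hA hB hd1 hd2]
    obtain ⟨q1, hQ1⟩ : ∃ x, Real.sqrt (c₁ - u + s ^ 2) = x := ⟨_, rfl⟩
    obtain ⟨q2, hQ2⟩ : ∃ x, Real.sqrt (c₂ - u + s ^ 2) = x := ⟨_, rfl⟩
    simp only [hQ1, hQ2] at hd1 hd2 hq1s hq2s ⊢
    obtain ⟨d1, hE1⟩ : ∃ x, ε * q1 - s = x := ⟨_, rfl⟩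
    obtain ⟨d2, hE2⟩ : ∃ x, ε * q2 - s = x := ⟨_, rfl⟩
    rw [hE1] at hd1 ⊢
    rw [hE2] at hd2 ⊢
    field_simp
    rw [← hE1, ← hE2]
    rcases hε with rfl | rfl <;> ring
  · rw [Hψ u s hA hB hd1 hd2 (ne_of_gt hφ0), eψ2, eψ1, hφ u s]
    have hK : K = κ * σ := by
      rw [hσdef]
      field_simp
    rw [hK]
    have hσr : σ = -r ^ 2 := by linarith
    rw [hσr]
    obtain ⟨q1, hQ1⟩ : ∃ x, Real.sqrt (c₁ - u + s ^ 2) = x := ⟨_, rfl⟩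
    obtain ⟨q2, hQ2⟩ : ∃ x, Real.sqrt (c₂ - u + s ^ 2) = x := ⟨_, rfl⟩
    simp only [hQ1, hQ2] at hd1 hd2 hq1s hq2s ⊢
    obtain ⟨d1, hE1⟩ : ∃ x, ε * q1 - s = x := ⟨_, rfl⟩
    obtain ⟨d2, hE2⟩ : ∃ x, ε * q2 - s = x := ⟨_, rfl⟩
    rw [hE1] at hd1 ⊢
    rw [hE2] at hd2 ⊢
    field_simp
    rw [← hE1, ← hE2]
    rcases hε with rfl | rfl <;> ring
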